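/- Let Q ⊆ ℝ^d be closed convex and V : ℝ^d → ℝ^d be globally Lipschitz with constant L. If x₁, x₂ : [0,T] → Q are absolutely continuous curves with ẋᵢ(t) = Proj_{π_Q(xᵢ(t))}(V(xᵢ(t))) for a.e. t, then ‖x₁(t) - x₂(t)‖ ≤ e^{L t} ‖x₁(0) - x₂(0)‖ for all t ∈ [0,T]. -/

import Mathlib

open MeasureTheory Set
open scoped RealInnerProductSpace

/-- The tangent cone of `Q` at `x`. -/
def tangentConeOf {d : ℕ} (Q : Set (EuclideanSpace ℝ (Fin d)))
    (x : EuclideanSpace ℝ (Fin d)) : Set (EuclideanSpace ℝ (Fin d)) :=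
  closure {v | ∃ ε > (0 : ℝ), x + ε • v ∈ Q}

section Aux
variable {d : ℕ}

lemma shrink_mem {Q : Set (EuclideanSpace ℝ (Fin d))} (hconv : Convex ℝ Q)
    {x u : EuclideanSpace ℝ (Fin d)} (hx : x ∈ Q) {ε δ : ℝ}
    (hδ : 0 < δ) (hδε : δ ≤ ε) (h : x + ε • u ∈ Q) : x + δ • u ∈ Q := by
  have hε : 0 < ε := lt_of_lt_of_le hδ hδε
  have h2 := hconv hx h (a := 1 - δ/ε) (b := δ/ε)
    (by rw [sub_nonneg]; exact div_le_one_of_le₀ hδε hε.le)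
    (by positivity) (by ring)
  have h3 : (1 - δ/ε) • x + (δ/ε) • (x + ε • u) = x + δ • u := by
    match_scalars <;> field_simp <;> ring
  rwa [h3] at h2

lemma preCone_add {Q : Set (EuclideanSpace ℝ (Fin d))} (hconv : Convex ℝ Q)
    {x : EuclideanSpace ℝ (Fin d)} (hx : x ∈ Q)
    {u q : EuclideanSpace ℝ (Fin d)}
    (hu : u ∈ {v | ∃ ε > (0 : ℝ), x + ε • v ∈ Q})
    (hq : q ∈ {v | ∃ ε > (0 : ℝ), x + ε • v ∈ Q}) :
    u + q ∈ {v | ∃ ε > (0 : ℝ), x + ε • v ∈ Q} := by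
  obtain ⟨ε₁, hε₁, h₁⟩ := hu
  obtain ⟨ε₂, hε₂, h₂⟩ := hq
  have hηpos : (0:ℝ) < min ε₁ ε₂ / 2 := by positivity
  refine ⟨min ε₁ ε₂ / 2, hηpos, ?_⟩
  have hu' : x + (2 * (min ε₁ ε₂ / 2)) • u ∈ Q := shrink_mem hconv hx (by positivity)
    (by rw [mul_div_cancel₀ _ (two_ne_zero)]; exact min_le_left _ _) h₁
  have hq' : x + (2 * (min ε₁ ε₂ / 2)) • q ∈ Q := shrink_mem hconv hx (by positivity)
    (by rw [mul_div_cancel₀ _ (two_ne_zero)]; exact min_le_right _ _) h₂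
  have h3 := hconv hu' hq' (a := 1/2) (b := 1/2) (by norm_num) (by norm_num) (by norm_num)
  have h4 : (1/2 : ℝ) • (x + (2 * (min ε₁ ε₂ / 2)) • u)
      + (1/2 : ℝ) • (x + (2 * (min ε₁ ε₂ / 2)) • q) = x + (min ε₁ ε₂ / 2) • (u + q) := by
    match_scalars <;> ring
  rwa [h4] at h3

lemma preCone_convex {Q : Set (EuclideanSpace ℝ (Fin d))} (hconv : Convex ℝ Q)
    {x : EuclideanSpace ℝ (Fin d)} (hx : x ∈ Q) :
    Convex ℝ {v | ∃ ε > (0 : ℝ), x + ε • v ∈ Q} := by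
  rintro u ⟨ε₁, hε₁, h₁⟩ q ⟨ε₂, hε₂, h₂⟩ a b ha hb hab
  have hηpos : (0:ℝ) < min ε₁ ε₂ := lt_min hε₁ hε₂
  refine ⟨min ε₁ ε₂, hηpos, ?_⟩
  have hu' : x + (min ε₁ ε₂) • u ∈ Q := shrink_mem hconv hx hηpos (min_le_left _ _) h₁
  have hq' : x + (min ε₁ ε₂) • q ∈ Q := shrink_mem hconv hx hηpos (min_le_right _ _) h₂
  have h3 := hconv hu' hq' ha hb hab
  have h4 : a • (x + (min ε₁ ε₂) • u) + b • (x + (min ε₁ ε₂) • q)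
      = x + (min ε₁ ε₂) • (a • u + b • q) := by
    match_scalars
    · linarith
    · ring
    · ring
  rwa [h4] at h3

lemma proj_normal {Q : Set (EuclideanSpace ℝ (Fin d))} (hconv : Convex ℝ Q)
    {x p V' : EuclideanSpace ℝ (Fin d)} (hx : x ∈ Q)
    (hmem : p ∈ tangentConeOf Q x)
    (hmin : ∀ u ∈ tangentConeOf Q x, ‖p - V'‖ ≤ ‖u - V'‖)
    {y : EuclideanSpace ℝ (Fin d)} (hy : y ∈ Q) : ⟪V' - p, y - x⟫ ≤ 0 := by
  set C := {v : EuclideanSpace ℝ (Fin d) | ∃ ε > (0 : ℝ), x + ε • v ∈ Q} with hC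
  have hK : Convex ℝ (tangentConeOf Q x) := (preCone_convex hconv hx).closure
  have hqC : y - x ∈ C := ⟨1, one_pos, by simpa using hy⟩
  have hpq : p + (y - x) ∈ tangentConeOf Q x := by
    have h1 : (fun z => z + (y - x)) '' C ⊆ C := by
      rintro _ ⟨z, hz, rfl⟩; exact preCone_add hconv hx hz hqC
    have h2 : p + (y - x) ∈ (fun z => z + (y - x)) '' closure C := ⟨p, hmem, rfl⟩
    exact closure_mono h1 (image_closure_subset_closure_image (continuous_add_right _) h2)
  have heq : ‖V' - p‖ = ⨅ w : tangentConeOf Q x, ‖V' - w‖ := by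
    have hne : Nonempty (tangentConeOf Q x) := ⟨⟨p, hmem⟩⟩
    apply le_antisymm
    · exact le_ciInf fun w => by
        rw [norm_sub_rev, norm_sub_rev V' (w : EuclideanSpace ℝ (Fin d))]
        exact hmin w w.2
    · exact ciInf_le ⟨0, fun r ⟨w, hw⟩ => hw ▸ norm_nonneg _⟩ (⟨p, hmem⟩ : tangentConeOf Q x)
  have char := (norm_eq_iInf_iff_real_inner_le_zero hK hmem).mp heq
  have := char _ hpq
  simpa using this

lemma key_mono {Q : Set (EuclideanSpace ℝ (Fin d))} (hconv : Convex ℝ Q)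
    {a b pa pb va vb : EuclideanSpace ℝ (Fin d)} (ha : a ∈ Q) (hb : b ∈ Q)
    (hpa : pa ∈ tangentConeOf Q a) (hpamin : ∀ u ∈ tangentConeOf Q a, ‖pa - va‖ ≤ ‖u - va‖)
    (hpb : pb ∈ tangentConeOf Q b) (hpbmin : ∀ u ∈ tangentConeOf Q b, ‖pb - vb‖ ≤ ‖u - vb‖) :
    ⟪a - b, pa - pb⟫ ≤ ⟪a - b, va - vb⟫ := by
  have h1 : ⟪va - pa, b - a⟫ ≤ 0 := proj_normal hconv ha hpa hpamin hb
  have h2 : ⟪vb - pb, a - b⟫ ≤ 0 := proj_normal hconv hb hpb hpbmin ha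
  have e1 : ⟪a - b, va - vb⟫ - ⟪a - b, pa - pb⟫
      = -⟪va - pa, b - a⟫ - ⟪vb - pb, a - b⟫ := by
    simp only [inner_sub_left, inner_sub_right, real_inner_comm]
    ring
  linarith

lemma energy_identity (w : ℝ → EuclideanSpace ℝ (Fin d)) (hw : Integrable w (volume : Measure ℝ))
    {t : ℝ} (ht : 0 ≤ t) :
    ‖∫ s in (0:ℝ)..t, w s‖^2
      = 2 * ∫ s in (0:ℝ)..t, ⟪∫ r in (0:ℝ)..s, w r, w s⟫ := by
  set μ : Measure ℝ := volume.restrict (Ioc 0 t) with hμ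
  have hwμ : Integrable w μ := hw.restrict
  set J : EuclideanSpace ℝ (Fin d) := ∫ s, w s ∂μ with hJ
  set F : ℝ × ℝ → ℝ := fun p => ⟪w p.1, w p.2⟫ with hF
  have hFm : AEStronglyMeasurable F (μ.prod μ) := hwμ.1.comp_fst.inner hwμ.1.comp_snd
  have hFint : Integrable F (μ.prod μ) := by
    refine (hwμ.norm.mul_prod hwμ.norm).mono' hFm ?_
    filter_upwards with p
    simpa using abs_real_inner_le_norm (w p.1) (w p.2)
  have step1 : ∫ p, F p ∂(μ.prod μ) = ‖J‖^2 := by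
    rw [MeasureTheory.integral_prod F hFint]
    have h1 : ∀ r : ℝ, ∫ s, ⟪w r, w s⟫ ∂μ = ⟪w r, J⟫ := fun r => integral_inner hwμ (w r)
    simp_rw [hF, h1]
    have h2 : ∫ r, ⟪w r, J⟫ ∂μ = ⟪J, J⟫ := by
      have h3 : ∀ r : ℝ, ⟪w r, J⟫ = ⟪J, w r⟫ := fun r => real_inner_comm _ _
      simp_rw [h3]
      exact integral_inner hwμ J
    rw [h2, real_inner_self_eq_norm_sq]
  set D : Set (ℝ × ℝ) := {p | p.1 = p.2} with hD
  have hDmeas : MeasurableSet D := (isClosed_eq continuous_fst continuous_snd).measurableSet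
  have hDzero : (μ.prod μ) D = 0 := by
    rw [Measure.prod_apply hDmeas]
    have h0 : ∀ x : ℝ, μ (Prod.mk x ⁻¹' D) = 0 := by
      intro x
      have : Prod.mk x ⁻¹' D = {x} := by ext y; simp [hD, eq_comm]
      rw [this]
      exact le_antisymm (le_trans (Measure.restrict_le_self _)
        (by simp)) zero_le
    simp [h0]
  set S : Set (ℝ × ℝ) := {p | p.1 ≤ p.2} with hS
  have hSmeas : MeasurableSet S := (isClosed_le continuous_fst continuous_snd).measurableSet
  set G : ℝ × ℝ → ℝ := S.indicator F with hG
  have hGint : Integrable G (μ.prod μ) := hFint.indicator hSmeas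
  have hswap : ∫ p, G p.swap ∂(μ.prod μ) = ∫ p, G p ∂(μ.prod μ) := by
    have mp : MeasurePreserving Prod.swap (μ.prod μ) (μ.prod μ) :=
      Measure.measurePreserving_swap
    exact mp.integral_comp (MeasurableEquiv.prodComm (α := ℝ) (β := ℝ)).measurableEmbedding G
  have hGswapint : Integrable (fun p : ℝ × ℝ => G p.swap) (μ.prod μ) := by
    have mp : MeasurePreserving Prod.swap (μ.prod μ) (μ.prod μ) :=
      Measure.measurePreserving_swap
    exact (mp.integrable_comp hGint.1).mpr hGint
  have haeeq : F =ᵐ[μ.prod μ] fun p => G p + G p.swap := by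
    have hsub : {p : ℝ × ℝ | ¬ F p = G p + G p.swap} ⊆ D := by
      intro p hp
      by_contra hne
      apply hp
      rcases lt_or_gt_of_ne (hne : p.1 ≠ p.2) with h | h
      · have h1 : G p = F p := indicator_of_mem (show p ∈ S from le_of_lt h) F
        have h2 : G p.swap = 0 :=
          indicator_of_notMem (show p.swap ∉ S from not_le.mpr h) F
        simp [h1, h2]
      · have h1 : G p = 0 := indicator_of_notMem (show p ∉ S from not_le.mpr h) F
        have h2 : G p.swap = F p.swap := indicator_of_mem (show p.swap ∈ S from le_of_lt h) F
        have h3 : F p.swap = F p := real_inner_comm _ _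
        simp [h1, h2, h3]
    exact measure_mono_null hsub hDzero
  have step3 : ∫ p, F p ∂(μ.prod μ) = 2 * ∫ p, G p ∂(μ.prod μ) := by
    rw [integral_congr_ae haeeq, integral_add hGint hGswapint, hswap]
    ring
  have step2 : ∫ p, G p ∂(μ.prod μ)
      = ∫ s, ⟪∫ r in Ioc (0:ℝ) s, w r, w s⟫ ∂μ := by
    rw [MeasureTheory.integral_prod_symm G hGint]
    refine integral_congr_ae ?_
    filter_upwards [ae_restrict_mem measurableSet_Ioc] with s hs
    have h1 : (fun r => G (r, s)) = (Iic s).indicator (fun r => ⟪w r, w s⟫) := by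
      ext r
      by_cases h : r ≤ s
      · simp [hG, hS, hF, indicator_of_mem, h]
      · simp [hG, hS, hF, indicator_of_notMem, h]
    rw [h1, integral_indicator measurableSet_Iic, hμ,
      Measure.restrict_restrict measurableSet_Iic]
    have h2 : Iic s ∩ Ioc 0 t = Ioc 0 s := by
      ext r
      simp only [mem_inter_iff, mem_Iic, mem_Ioc]
      exact ⟨fun ⟨h3, h4, h5⟩ => ⟨h4, h3⟩, fun ⟨h4, h3⟩ => ⟨h3, h4, h3.trans hs.2⟩⟩
    rw [h2]
    have h4 : ∀ r : ℝ, ⟪w r, w s⟫ = ⟪w s, w r⟫ := fun r => real_inner_comm _ _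
    simp_rw [h4]
    rw [integral_inner (hw.restrict) (w s), real_inner_comm]
  have hL : ∫ s in (0:ℝ)..t, w s = J := by
    rw [intervalIntegral.integral_of_le ht, hJ, hμ]
  have hR : ∫ s in (0:ℝ)..t, ⟪∫ r in (0:ℝ)..s, w r, w s⟫
      = ∫ s, ⟪∫ r in Ioc (0:ℝ) s, w r, w s⟫ ∂μ := by
    rw [intervalIntegral.integral_of_le ht]
    refine integral_congr_ae ?_
    filter_upwards [ae_restrict_mem measurableSet_Ioc] with s hs
    rw [intervalIntegral.integral_of_le hs.1.le]
  rw [hL, hR, ← step2, ← step3, step1]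

end Aux

theorem stmt_5 (d : ℕ) (Q : Set (EuclideanSpace ℝ (Fin d)))
    (hcl : IsClosed Q) (hconv : Convex ℝ Q)
    (T : ℝ) (hT : 0 ≤ T) (L : NNReal)
    (V : EuclideanSpace ℝ (Fin d) → EuclideanSpace ℝ (Fin d))
    (hV : LipschitzWith L V)
    (x₁ x₂ v₁ v₂ : ℝ → EuclideanSpace ℝ (Fin d))
    (hmem₁ : ∀ t ∈ Set.Icc 0 T, x₁ t ∈ Q)
    (hmem₂ : ∀ t ∈ Set.Icc 0 T, x₂ t ∈ Q)
    -- absolute continuity: the curves are integrals of their a.e. derivatives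
    (hv₁int : IntegrableOn v₁ (Set.Icc 0 T))
    (hv₂int : IntegrableOn v₂ (Set.Icc 0 T))
    (hAC₁ : ∀ t ∈ Set.Icc 0 T, x₁ t = x₁ 0 + ∫ s in (0:ℝ)..t, v₁ s)
    (hAC₂ : ∀ t ∈ Set.Icc 0 T, x₂ t = x₂ 0 + ∫ s in (0:ℝ)..t, v₂ s)
    -- a.e. on [0,T], the derivative is the projection of `V ∘ xᵢ` onto the tangent cone
    (hproj₁ : ∀ᵐ t ∂(volume.restrict (Set.Icc 0 T)),
      v₁ t ∈ tangentConeOf Q (x₁ t) ∧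
      ∀ u ∈ tangentConeOf Q (x₁ t), ‖v₁ t - V (x₁ t)‖ ≤ ‖u - V (x₁ t)‖)
    (hproj₂ : ∀ᵐ t ∂(volume.restrict (Set.Icc 0 T)),
      v₂ t ∈ tangentConeOf Q (x₂ t) ∧
      ∀ u ∈ tangentConeOf Q (x₂ t), ‖v₂ t - V (x₂ t)‖ ≤ ‖u - V (x₂ t)‖) :
    ∀ t ∈ Set.Icc 0 T, ‖x₁ t - x₂ t‖ ≤ Real.exp (L * t) * ‖x₁ 0 - x₂ 0‖ := by
  set y0 : EuclideanSpace ℝ (Fin d) := x₁ 0 - x₂ 0 with hy0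
  set w : ℝ → EuclideanSpace ℝ (Fin d) :=
    (Set.Icc (0:ℝ) T).indicator (fun s => v₁ s - v₂ s) with hw
  have hwint : Integrable w (volume : Measure ℝ) := by
    have h0 : IntegrableOn (fun s => v₁ s - v₂ s) (Set.Icc (0:ℝ) T) volume := by
      exact hv₁int.sub hv₂int
    exact MeasureTheory.IntegrableOn.integrable_indicator h0 measurableSet_Icc
  set I : ℝ → EuclideanSpace ℝ (Fin d) := fun τ => ∫ s in (0:ℝ)..τ, w s with hI
  set y : ℝ → EuclideanSpace ℝ (Fin d) := fun τ => y0 + I τ with hy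
  set f : ℝ → ℝ := fun τ => ‖y τ‖^2 with hf
  have hIcont : Continuous I := hwint.continuous_primitive 0
  have hycont : Continuous y := continuous_const.add hIcont
  have hfcont : Continuous f := (hycont.norm.pow 2)
  have hI0 : I 0 = 0 := intervalIntegral.integral_same
  have hy0eq : y 0 = y0 := by rw [hy]; simp [hI0]
  have hagree : ∀ τ ∈ Set.Icc 0 T, x₁ τ - x₂ τ = y τ := by
    intro τ hτ
    have hint₁ : IntervalIntegrable v₁ volume 0 τ := by
      have : IntegrableOn v₁ (uIcc 0 τ) := by
        rw [uIcc_of_le hτ.1]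
        exact hv₁int.mono_set (Icc_subset_Icc le_rfl hτ.2)
      exact this.intervalIntegrable
    have hint₂ : IntervalIntegrable v₂ volume 0 τ := by
      have : IntegrableOn v₂ (uIcc 0 τ) := by
        rw [uIcc_of_le hτ.1]
        exact hv₂int.mono_set (Icc_subset_Icc le_rfl hτ.2)
      exact this.intervalIntegrable
    have hcongr : ∫ s in (0:ℝ)..τ, w s = ∫ s in (0:ℝ)..τ, (v₁ s - v₂ s) := by
      refine intervalIntegral.integral_congr ?_
      intro s hs
      rw [uIcc_of_le hτ.1] at hs
      exact indicator_of_mem (Icc_subset_Icc le_rfl hτ.2 hs) _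
    rw [hAC₁ τ hτ, hAC₂ τ hτ, hy, hI]
    simp only
    rw [hcongr, intervalIntegral.integral_sub hint₁ hint₂, hy0]
    abel
  -- integrability of the inner product integrands
  have hinner1 : Integrable (fun s => ⟪y0, w s⟫) (volume : Measure ℝ) := by
    refine (hwint.norm.const_mul ‖y0‖).mono'
      (AEStronglyMeasurable.inner aestronglyMeasurable_const hwint.1) ?_
    filter_upwards with s
    simpa using abs_real_inner_le_norm y0 (w s)
  have hIbdd : ∀ s : ℝ, ‖I s‖ ≤ ∫ r, ‖w r‖ := by
    intro s
    calc ‖I s‖ ≤ ∫ r in Set.uIoc 0 s, ‖w r‖ := intervalIntegral.norm_integral_le_integral_norm_uIoc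
    _ ≤ ∫ r, ‖w r‖ := setIntegral_le_integral hwint.norm
        (Filter.Eventually.of_forall fun r => norm_nonneg _)
  have hinner2 : Integrable (fun s => ⟪I s, w s⟫) (volume : Measure ℝ) := by
    refine (hwint.norm.const_mul (∫ r, ‖w r‖)).mono'
      (hIcont.aestronglyMeasurable.inner hwint.1) ?_
    filter_upwards with s
    have h1 := abs_real_inner_le_norm (I s) (w s)
    have h2 : ‖I s‖ * ‖w s‖ ≤ (∫ r, ‖w r‖) * ‖w s‖ :=
      mul_le_mul_of_nonneg_right (hIbdd s) (norm_nonneg _)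
    simp only [Real.norm_eq_abs]
    exact h1.trans h2
  have hgint : Integrable (fun s => 2 * ⟪y s, w s⟫) (volume : Measure ℝ) := by
    have : (fun s => 2 * ⟪y s, w s⟫)
        = fun s => 2 * ⟪y0, w s⟫ + 2 * ⟪I s, w s⟫ := by
      ext s
      rw [hy]
      simp only [inner_add_left]
      ring
    rw [this]
    exact ((hinner1.const_mul 2).add (hinner2.const_mul 2))
  -- the fundamental identity
  have hfid : ∀ τ : ℝ, 0 ≤ τ → f τ = f 0 + ∫ s in (0:ℝ)..τ, 2 * ⟪y s, w s⟫ := by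
    intro τ hτ
    have hsplit : ∫ s in (0:ℝ)..τ, 2 * ⟪y s, w s⟫
        = 2 * (∫ s in (0:ℝ)..τ, ⟪y0, w s⟫) + 2 * (∫ s in (0:ℝ)..τ, ⟪I s, w s⟫) := by
      have h1 : (fun s => 2 * ⟪y s, w s⟫)
          = fun s => 2 * ⟪y0, w s⟫ + 2 * ⟪I s, w s⟫ := by
        ext s
        rw [hy]
        simp only [inner_add_left]
        ring
      rw [h1, intervalIntegral.integral_add
        ((hinner1.const_mul 2).intervalIntegrable)
        ((hinner2.const_mul 2).intervalIntegrable),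
        intervalIntegral.integral_const_mul, intervalIntegral.integral_const_mul]
    have hfirst : ∫ s in (0:ℝ)..τ, ⟪y0, w s⟫ = ⟪y0, I τ⟫ := by
      rw [intervalIntegral.integral_of_le hτ, hI]
      simp only
      rw [intervalIntegral.integral_of_le hτ]
      exact integral_inner hwint.restrict y0
    have hsecond : 2 * (∫ s in (0:ℝ)..τ, ⟪I s, w s⟫) = ‖I τ‖^2 :=
      (energy_identity w hwint hτ).symm
    have hf0 : f 0 = ‖y0‖^2 := by
      rw [show f 0 = ‖y 0‖^2 from rfl, hy0eq]
    rw [hsplit, hfirst, hsecond, hf0, show f τ = ‖y0 + I τ‖^2 from rfl, norm_add_sq_real]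
    ring
  -- a.e. differential inequality
  have hae : ∀ᵐ s ∂(volume.restrict (Set.Icc 0 T)),
      2 * ⟪y s, w s⟫ ≤ 2 * (L : ℝ) * f s := by
    filter_upwards [hproj₁, hproj₂, ae_restrict_mem measurableSet_Icc] with s h1 h2 hs
    have hx1 := hmem₁ s hs
    have hx2 := hmem₂ s hs
    have hkey : ⟪x₁ s - x₂ s, v₁ s - v₂ s⟫ ≤ ⟪x₁ s - x₂ s, V (x₁ s) - V (x₂ s)⟫ :=
      key_mono hconv hx1 hx2 h1.1 h1.2 h2.1 h2.2
    have hCS : ⟪x₁ s - x₂ s, V (x₁ s) - V (x₂ s)⟫ ≤ ‖x₁ s - x₂ s‖ * ‖V (x₁ s) - V (x₂ s)‖ :=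
      real_inner_le_norm _ _
    have hlip : ‖V (x₁ s) - V (x₂ s)‖ ≤ (L : ℝ) * ‖x₁ s - x₂ s‖ := by
      have := hV.dist_le_mul (x₁ s) (x₂ s)
      rwa [dist_eq_norm, dist_eq_norm] at this
    have hys : y s = x₁ s - x₂ s := (hagree s hs).symm
    have hws : w s = v₁ s - v₂ s := indicator_of_mem hs _
    rw [hys, hws, show f s = ‖y s‖^2 from rfl, hys]
    have h3 : ‖x₁ s - x₂ s‖ * ‖V (x₁ s) - V (x₂ s)‖
        ≤ (L : ℝ) * ‖x₁ s - x₂ s‖^2 := by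
      calc ‖x₁ s - x₂ s‖ * ‖V (x₁ s) - V (x₂ s)‖
          ≤ ‖x₁ s - x₂ s‖ * ((L : ℝ) * ‖x₁ s - x₂ s‖) :=
            mul_le_mul_of_nonneg_left hlip (norm_nonneg _)
      _ = (L : ℝ) * ‖x₁ s - x₂ s‖^2 := by ring
    nlinarith [hkey, hCS]
  -- integral inequality
  set A : ℝ := f 0 with hA
  have hint : ∀ t ∈ Set.Icc 0 T, f t ≤ A + ∫ s in (0:ℝ)..t, (2 * (L : ℝ)) * f s := by
    intro t ht
    have hmono : (∫ s in (0:ℝ)..t, 2 * ⟪y s, w s⟫)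
        ≤ ∫ s in (0:ℝ)..t, (2 * (L : ℝ)) * f s := by
      refine intervalIntegral.integral_mono_ae_restrict ht.1
        hgint.intervalIntegrable
        (((hfcont.const_smul (2 * (L:ℝ))).intervalIntegrable 0 t)) ?_
      have hsub : Set.Icc (0:ℝ) t ⊆ Set.Icc 0 T := Icc_subset_Icc le_rfl ht.2
      have := ae_restrict_of_ae_restrict_of_subset hsub hae
      filter_upwards [this] with s hs
      simpa using hs
    calc f t = A + ∫ s in (0:ℝ)..t, 2 * ⟪y s, w s⟫ := hfid t ht.1
    _ ≤ A + ∫ s in (0:ℝ)..t, (2 * (L : ℝ)) * f s := by linarith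
  -- Gronwall
  set F : ℝ → ℝ := fun τ => ∫ s in (0:ℝ)..τ, f s with hF
  have hfnonneg : ∀ s : ℝ, 0 ≤ f s := fun s => sq_nonneg _
  have hFnonneg : ∀ t : ℝ, 0 ≤ t → 0 ≤ F t := fun t ht =>
    intervalIntegral.integral_nonneg ht (fun s _ => hfnonneg s)
  have hFderiv : ∀ τ : ℝ, HasDerivAt F (f τ) τ := fun τ =>
    (hfcont.integral_hasStrictDerivAt 0 τ).hasDerivAt
  have hgron := norm_le_gronwallBound_of_norm_deriv_right_le
    (f := F) (f' := f) (δ := 0) (K := 2 * (L : ℝ)) (ε := A) (a := 0) (b := T)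
    (fun τ _ => (hFderiv τ).continuousAt.continuousWithinAt)
    (fun τ hτ => (hFderiv τ).hasDerivWithinAt)
    (by simp [hF])
    ?_
  · intro t ht
    have hb := hgron t ht
    rw [sub_zero] at hb
    have hFt : F t = ‖F t‖ := (Real.norm_of_nonneg (hFnonneg t ht.1)).symm
    have hft : f t ≤ A + (2 * (L:ℝ)) * gronwallBound 0 (2 * (L:ℝ)) A t := by
      have h5 := hint t ht
      rw [intervalIntegral.integral_const_mul] at h5
      have h6 : (2 * (L:ℝ)) * F t ≤ (2 * (L:ℝ)) * gronwallBound 0 (2 * (L:ℝ)) A t := by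
        apply mul_le_mul_of_nonneg_left _ (by positivity)
        rw [hFt]; exact hb
      calc f t ≤ A + (2 * (L:ℝ)) * F t := h5
      _ ≤ A + (2 * (L:ℝ)) * gronwallBound 0 (2 * (L:ℝ)) A t := by linarith
    have hexp : A + (2 * (L:ℝ)) * gronwallBound 0 (2 * (L:ℝ)) A t
        = A * Real.exp (2 * (L:ℝ) * t) := by
      by_cases hK : (2 * (L:ℝ)) = 0
      · rw [hK, gronwallBound_K0]
        simp [hK]
      · rw [gronwallBound_of_K_ne_0 hK]
        have hL : (L:ℝ) ≠ 0 := fun h => hK (by rw [h]; ring)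
        field_simp
        ring
    rw [hexp] at hft
    -- conclude
    have hfform : f t = ‖x₁ t - x₂ t‖^2 := by
      rw [show f t = ‖y t‖^2 from rfl, hagree t ht]
    have hAform : A = ‖y0‖^2 := by
      rw [show A = ‖y 0‖^2 from rfl, hy0eq]
    have hsq : ‖x₁ t - x₂ t‖^2 ≤ (Real.exp ((L:ℝ) * t) * ‖y0‖)^2 := by
      rw [← hfform]
      calc f t ≤ A * Real.exp (2 * (L:ℝ) * t) := hft
      _ = (Real.exp ((L:ℝ) * t) * ‖y0‖)^2 := by
          rw [hAform, mul_pow, ← Real.exp_nat_mul, show ((2:ℕ):ℝ) * ((L:ℝ) * t) = 2 * (L:ℝ) * t by push_cast; ring]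
          ring
    exact le_of_sq_le_sq hsq (by positivity)
  · intro τ hτ
    have h5 := hint τ (Ico_subset_Icc_self hτ)
    rw [intervalIntegral.integral_const_mul] at h5
    have hFτ : ‖F τ‖ = F τ := Real.norm_of_nonneg (hFnonneg τ hτ.1)
    rw [Real.norm_of_nonneg (hfnonneg τ), hFτ]
    linarith
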